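/- Let q ≡ 3 (mod 4) be a prime power and let a, b, c, d be points on the paraboloid P ⊂ F_q³. Then a + b = c + d if and only if the four projected points a̲, c̲, b̲, d̲ form a rectangle in F_q² (in this cyclic order). -/

import Mathlib

/-- The paraboloid `z = x² + y²` in `F³`. -/
def Paraboloid (F : Type) [Field F] : Set (F × F × F) :=
  {p | p.2.2 = p.1 ^ 2 + p.2.1 ^ 2}

/-- Projection of a point of `F³` onto its first two coordinates. -/
def proj {F : Type} [Field F] (p : F × F × F) : F × F := (p.1, p.2.1)

/-- The standard dot product on `F²`. -/
def dot2 {F : Type} [Field F] (u v : F × F) : F := u.1 * v.1 + u.2 * v.2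

/-- Four points `x, z, y, t` of `F²` form a rectangle in this cyclic order. -/
def IsRect {F : Type} [Field F] (x z y t : F × F) : Prop :=
  dot2 (x - z) (y - z) = 0 ∧ dot2 (z - y) (t - y) = 0 ∧
    dot2 (y - t) (x - t) = 0 ∧ dot2 (t - x) (z - x) = 0

lemma half_aux {F : Type} [Field F] (h2 : (2 : F) ≠ 0) {x : F} (h : 2 * x = 0) :
    x = 0 := by
  rcases mul_eq_zero.mp h with h | h
  · exact absurd h h2
  · exact h

lemma sq_add_sq_eq_zero_aux {F : Type} [Field F] [Fintype F]
    (hq : Fintype.card F % 4 = 3) {x y : F} (h : x ^ 2 + y ^ 2 = 0) :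
    x = 0 ∧ y = 0 := by
  have hns : ¬ IsSquare (-1 : F) := by
    rw [FiniteField.isSquare_neg_one_iff]; omega
  rcases eq_or_ne y 0 with hy | hy
  · subst hy
    refine ⟨?_, rfl⟩
    have : x ^ 2 = 0 := by linear_combination h
    exact pow_eq_zero_iff (two_ne_zero) |>.mp this
  · exfalso
    apply hns
    refine ⟨x / y, ?_⟩
    field_simp
    linear_combination -h

theorem stmt_4 (F : Type) [Field F] [Fintype F]
    (hq : Fintype.card F % 4 = 3)
    (a b c d : F × F × F)
    (ha : a ∈ Paraboloid F) (hb : b ∈ Paraboloid F)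
    (hc : c ∈ Paraboloid F) (hd : d ∈ Paraboloid F) :
    a + b = c + d ↔ IsRect (proj a) (proj c) (proj b) (proj d) := by
  obtain ⟨a1, a2, a3⟩ := a
  obtain ⟨b1, b2, b3⟩ := b
  obtain ⟨c1, c2, c3⟩ := c
  obtain ⟨d1, d2, d3⟩ := d
  simp only [Paraboloid, Set.mem_setOf_eq] at ha hb hc hd
  subst ha hb hc hd
  simp only [IsRect, proj, dot2, Prod.mk_add_mk, Prod.mk.injEq, Prod.mk_sub_mk]
  have hns : ¬ IsSquare (-1 : F) := by
    rw [FiniteField.isSquare_neg_one_iff]; omega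
  have h2ne : (2 : F) ≠ 0 := by
    intro h
    apply hns
    have : (-1 : F) = 1 := by linear_combination -h
    rw [this]
    exact IsSquare.one
  constructor
  · rintro ⟨h1, h2, h3⟩
    have hd1 : d1 = a1 + b1 - c1 := by linear_combination -h1
    have hd2 : d2 = a2 + b2 - c2 := by linear_combination -h2
    subst hd1 hd2
    refine ⟨half_aux h2ne ?_, half_aux h2ne ?_, half_aux h2ne ?_, half_aux h2ne ?_⟩ <;>
      first
        | linear_combination -h3
        | linear_combination h3
  · rintro ⟨h1, h2, h3, h4⟩
    have he : (d1 - a1 - b1 + c1) ^ 2 + (d2 - a2 - b2 + c2) ^ 2 = 0 := by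
      linear_combination h1 + h2 + h3 + h4
    obtain ⟨he1, he2⟩ := sq_add_sq_eq_zero_aux hq he
    have hd1 : d1 = a1 + b1 - c1 := by linear_combination he1
    have hd2 : d2 = a2 + b2 - c2 := by linear_combination he2
    subst hd1 hd2
    exact ⟨by ring, by ring, by linear_combination -2 * h1⟩
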